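/- arXiv:1510.02554 — 4 statements merged into one kernel-verified Lean document; each statement's English description precedes it below -/
import Mathlib

section
/- For every Gauss code D there exists a set S of chords of D such that the Gauss code obtained from D by the crossing change at S represents the trivial welded knot, i.e., is welded-equivalent to the empty code. -/
/-!
Gauss codes for welded knots.

A Gauss code is a cyclic word in which each chord label occurs exactly twice,
once as a tail (`isHead = false`) and once as a head (`isHead = true`), both
occurrences carrying the common sign of the chord.  We represent the cyclic
word by a linear list of entries, working up to rotation (`List.rotate`) and
injective relabelling of the chords.
-/

/-- An endpoint of a chord: `(chord label, isHead, sign)`, where `isHead = false`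
means a tail (over-passing) endpoint and `isHead = true` a head (under-passing)
endpoint, and the sign `true`/`false` stands for `+1`/`-1`. -/
abbrev GEntry : Type := ℕ × Bool × Bool

/-- A (linear representative of a cyclic) word of endpoints. -/
abbrev GWord : Type := List GEntry

/-- The set of chord labels occurring in a word. -/
def chordSet (w : GWord) : Set ℕ := {a | ∃ e ∈ w, e.1 = a}

/-- `w` is a Gauss code: every chord label that occurs in `w` occurs exactly
twice, once as a tail and once as a head, with a common sign. -/
def IsGaussCode (w : GWord) : Prop :=
  ∀ a ∈ chordSet w,
    w.countP (fun e => e.1 == a) = 2 ∧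
    ∃ s : Bool, (a, false, s) ∈ w ∧ (a, true, s) ∈ w

/-- The crossing change at the set `S` of chords: at every chord of `S`, the
tail and head markings of its two occurrences are exchanged and its sign is
reversed. -/
def crossingChange (S : Finset ℕ) (w : GWord) : GWord :=
  w.map fun e => if e.1 ∈ S then (e.1, !e.2.1, !e.2.2) else e

/-- Deletion of the chord `a` (both of its endpoints) from the word. -/
def deleteChord (a : ℕ) (w : GWord) : GWord :=
  w.filter fun e => e.1 != a

/-- Equality of words up to cyclic permutation. -/
def RotEq (w w' : GWord) : Prop := ∃ n : ℕ, w' = w.rotate n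

/-- Renaming the chords of a word by `f`. -/
def relabelWord (f : ℕ → ℕ) (w : GWord) : GWord := w.map fun e => (f e.1, e.2)

/-- Equality of words up to cyclic permutation and (injective) renaming of
the chords. -/
def CyclicRename (w w' : GWord) : Prop :=
  ∃ (n : ℕ) (f : ℕ → ℕ), Function.Injective f ∧ w' = relabelWord f (w.rotate n)

/-- Raw C1 move (deleting direction): deletion of a chord whose two endpoints
occupy adjacent positions; the inserting direction is the converse relation. -/
def C1delRaw (u v : GWord) : Prop :=
  ∃ (x y : GWord) (a : ℕ) (h s : Bool),
    (∀ e ∈ x ++ y, e.1 ≠ a) ∧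
    u = x ++ (a, h, s) :: (a, !h, s) :: y ∧
    v = x ++ y

/-- Raw W move: interchange of two adjacent endpoints that are both tails
(of any two chords, regardless of signs). -/
def WRaw (u v : GWord) : Prop :=
  ∃ (x y : GWord) (a b : ℕ) (s t : Bool),
    u = x ++ (a, false, s) :: (b, false, t) :: y ∧
    v = x ++ (b, false, t) :: (a, false, s) :: y

/-- Raw C2 move (deleting direction): deletion of a pair of chords of opposite
signs whose two tails occupy adjacent positions and whose two heads occupy
adjacent positions. -/
def C2delRaw (u v : GWord) : Prop :=
  ∃ (x y z : GWord) (a b : ℕ) (s : Bool),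
    a ≠ b ∧
    (∀ e ∈ x ++ y ++ z, e.1 ≠ a ∧ e.1 ≠ b) ∧
    (u = x ++ (a, false, s) :: (b, false, !s) :: (y ++ (a, true, s) :: (b, true, !s) :: z) ∨
     u = x ++ (a, false, s) :: (b, false, !s) :: (y ++ (b, true, !s) :: (a, true, s) :: z)) ∧
    v = x ++ y ++ z

/-- Raw C3 move: the Gauss-code translation of the planar Reidemeister move of
type 3.  Three strands `A`, `B`, `C` (modelled on the lines `y = -1`, `y = x`,
`y = -x` and their directions `(1,0)`, `(1,1)`, `(-1,1)`, possibly reversed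
according to `dA`, `dB`, `dC`) meet pairwise in the chords `a = AB`, `b = AC`,
`c = BC`; `oAB`, `oAC`, `oBC` record which strand passes over in each pair and
must come from a linear height order.  The six endpoints form three adjacent
pairs, one on each strand, and the move exchanges the order within each pair;
the head/tail pattern is determined by the heights and the signs by the heights
and the directions, as in a planar diagram. -/
def C3Raw (u v : GWord) : Prop :=
  ∃ (x y z t : GWord) (a b c : ℕ) (oAB oAC oBC dA dB dC swap : Bool),
    a ≠ b ∧ a ≠ c ∧ b ≠ c ∧
    (oAB = oBC → oAC = oAB) ∧
    (let sa : Bool := (dA == dB) == oAB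
     let sb : Bool := (dA == dC) == oAC
     let sc : Bool := (dB == dC) == oBC
     let PA : GWord :=
       if dA then [(a, !oAB, sa), (b, !oAC, sb)] else [(b, !oAC, sb), (a, !oAB, sa)]
     let PB : GWord :=
       if dB then [(a, oAB, sa), (c, !oBC, sc)] else [(c, !oBC, sc), (a, oAB, sa)]
     let PC : GWord :=
       if dC then [(b, oAC, sb), (c, oBC, sc)] else [(c, oBC, sc), (b, oAC, sb)]
     let Q1 : GWord := if swap then PC else PB
     let Q2 : GWord := if swap then PB else PC
     u = x ++ PA ++ y ++ Q1 ++ z ++ Q2 ++ t ∧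
     v = x ++ PA.reverse ++ y ++ Q1.reverse ++ z ++ Q2.reverse ++ t)

/-- One welded Reidemeister move (C1, C2, C3 or W, in either direction),
performed up to cyclic permutation and renaming of chords. -/
def WeldedStep (u v : GWord) : Prop :=
  ∃ u₀ v₀ : GWord, CyclicRename u u₀ ∧ CyclicRename v₀ v ∧
    (C1delRaw u₀ v₀ ∨ C1delRaw v₀ u₀ ∨ C2delRaw u₀ v₀ ∨ C2delRaw v₀ u₀ ∨
     C3Raw u₀ v₀ ∨ C3Raw v₀ u₀ ∨ WRaw u₀ v₀)

/-- Welded equivalence: two Gauss codes are welded-equivalent if they are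
related by a finite sequence of C1, C2, C3 and W moves (on cyclic words). -/
def WeldedEquiv : GWord → GWord → Prop := Relation.EqvGen WeldedStep

/-- A Gauss code represents the trivial welded knot iff it is
welded-equivalent to the empty code. -/
def RepresentsTrivial (w : GWord) : Prop := WeldedEquiv w []

/-- One C1 or W move (in either direction), up to cyclic permutation and
renaming of chords. -/
def CWStep (u v : GWord) : Prop :=
  ∃ u₀ v₀ : GWord, CyclicRename u u₀ ∧ CyclicRename v₀ v ∧
    (C1delRaw u₀ v₀ ∨ C1delRaw v₀ u₀ ∨ WRaw u₀ v₀)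

/-- Relatedness by a finite sequence of C1 and W moves alone. -/
def CWEquiv : GWord → GWord → Prop := Relation.EqvGen CWStep

/-- One W move, up to cyclic permutation. -/
def WStepRot (u v : GWord) : Prop :=
  ∃ u₀ v₀ : GWord, RotEq u u₀ ∧ RotEq v₀ v ∧ WRaw u₀ v₀

/-- One deleting C1 move, up to cyclic permutation. -/
def C1StepRot (u v : GWord) : Prop :=
  ∃ u₀ v₀ : GWord, RotEq u u₀ ∧ RotEq v₀ v ∧ C1delRaw u₀ v₀

/-- In the linear word `v`, no chord has its head occurring strictly before
its tail. -/
def TailsFirst (v : GWord) : Prop :=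
  ¬ ∃ (x y z : GWord) (a : ℕ) (s s' : Bool),
      v = x ++ (a, true, s) :: (y ++ (a, false, s') :: z)

/-- A Gauss code is descending if the cyclic word can be cut at some point and
read in one of the two directions so that every chord's tail occurs before its
head. -/
def IsDescending (w : GWord) : Prop :=
  ∃ n : ℕ, TailsFirst (w.rotate n) ∨ TailsFirst ((w.rotate n).reverse)

/-- `c(D)`: the minimal number of chords of a Gauss code representing the same
welded knot as `D`. -/
noncomputable def minCrossing (D : GWord) : ℕ :=
  sInf {n : ℕ | ∃ D' : GWord, IsGaussCode D' ∧ WeldedEquiv D D' ∧ (chordSet D').ncard = n}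

/-- `u(D)`: the minimal cardinality of a set `S` of chords of `D` such that the
crossing change at `S` turns `D` into a Gauss code representing the trivial
welded knot. -/
noncomputable def unknottingNumWord (D : GWord) : ℕ :=
  sInf {k : ℕ | ∃ S : Finset ℕ, ↑S ⊆ chordSet D ∧ S.card = k ∧
    WeldedEquiv (crossingChange S D) []}

/-- `u(K)`: the minimum of `u(D')` over all Gauss codes `D'` representing the
same welded knot as `D`. -/
noncomputable def unknottingNum (D : GWord) : ℕ :=
  sInf {k : ℕ | ∃ D' : GWord, IsGaussCode D' ∧ WeldedEquiv D D' ∧ unknottingNumWord D' = k}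
section CCUAux

open Relation List

lemma ccu_cyclicRename_refl (w : GWord) : CyclicRename w w :=
  ⟨0, id, Function.injective_id, by simp [relabelWord]⟩

lemma ccu_we_of_wraw {u v : GWord} (h : WRaw u v) : WeldedEquiv u v :=
  Relation.EqvGen.rel _ _ ⟨u, v, ccu_cyclicRename_refl u, ccu_cyclicRename_refl v,
    Or.inr (Or.inr (Or.inr (Or.inr (Or.inr (Or.inr h)))))⟩

lemma ccu_we_of_c1 {u v : GWord} (h : C1delRaw u v) : WeldedEquiv u v :=
  Relation.EqvGen.rel _ _ ⟨u, v, ccu_cyclicRename_refl u, ccu_cyclicRename_refl v, Or.inl h⟩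

lemma ccu_wstep (x y : GWord) (a b : ℕ) (s t : Bool) :
    WeldedEquiv (x ++ (a, false, s) :: (b, false, t) :: y)
      (x ++ (b, false, t) :: (a, false, s) :: y) :=
  ccu_we_of_wraw ⟨x, y, a, b, s, t, rfl, rfl⟩

lemma ccu_c1del (x y : GWord) (a : ℕ) (s : Bool) (h : ∀ e ∈ x ++ y, e.1 ≠ a) :
    WeldedEquiv (x ++ (a, false, s) :: (a, true, s) :: y) (x ++ y) :=
  ccu_we_of_c1 ⟨x, y, a, false, s, h, rfl, rfl⟩

/-- Move a tail leftwards across a block of tails, by W moves. -/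
lemma ccu_move_tail (m : GWord) : ∀ (x y : GWord) (a : ℕ) (s : Bool),
    (∀ e ∈ m, e.2.1 = false) →
    WeldedEquiv (x ++ m ++ (a, false, s) :: y) (x ++ (a, false, s) :: (m ++ y)) := by
  induction m with
  | nil =>
      intro x y a s _
      simp only [List.append_nil, List.nil_append]
      exact Relation.EqvGen.refl _
  | cons e m ih =>
      intro x y a s hm
      obtain ⟨b, f, t⟩ := e
      have hf : f = false := hm (b, f, t) (by simp)
      subst hf
      have h1 := ih (x ++ [(b, false, t)]) y a s (fun e he => hm e (by simp [he]))
      have h2 := ccu_wstep x (m ++ y) b a t s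
      refine Relation.EqvGen.trans _ _ _ ?_ h2
      simpa [List.append_assoc, WeldedEquiv] using h1

def ccu_headFirst (a : ℕ) : GWord → Bool
  | [] => false
  | e :: w => if e.1 = a then e.2.1 else ccu_headFirst a w

lemma ccu_headFirst_eq (a : ℕ) (x : GWord) (e : GEntry) (y : GWord)
    (hx : ∀ e' ∈ x, e'.1 ≠ a) (he : e.1 = a) :
    ccu_headFirst a (x ++ e :: y) = e.2.1 := by
  induction x with
  | nil => simp [ccu_headFirst, he]
  | cons f x ih =>
      have hf : f.1 ≠ a := hx f (by simp)
      simp only [List.cons_append, ccu_headFirst, if_neg hf]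
      exact ih (fun e' h' => hx e' (by simp [h']))

lemma ccu_pair_sublist_decomp {p q : GEntry} : ∀ {w : GWord}, [p, q] <+ w →
    ∃ x y z, w = x ++ p :: (y ++ q :: z) := by
  intro w h
  induction w with
  | nil => simp at h
  | cons e w ih =>
      rcases List.sublist_cons_iff.mp h with h' | ⟨r, hr, hsub⟩
      · obtain ⟨x, y, z, hxyz⟩ := ih h'
        exact ⟨e :: x, y, z, by simp [hxyz]⟩
      · injection hr with h1 h2
        subst h1
        have hq : q ∈ w := List.singleton_sublist.mp (h2 ▸ hsub)
        obtain ⟨y, z, hyz⟩ := List.append_of_mem hq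
        exact ⟨[], y, z, by simp [hyz]⟩

lemma ccu_decomp_pair_sublist (x y z : GWord) (p q : GEntry) :
    [p, q] <+ x ++ p :: (y ++ q :: z) := by
  refine List.Sublist.trans ?_ (List.sublist_append_right x _)
  refine List.Sublist.cons₂ p ?_
  refine List.Sublist.trans ?_ (List.sublist_append_right y _)
  exact List.Sublist.cons₂ q (List.nil_sublist z)

lemma ccu_tailsFirst_iff (w : GWord) :
    TailsFirst w ↔ ¬ ∃ (a : ℕ) (s s' : Bool), [(a, true, s), (a, false, s')] <+ w := by
  unfold TailsFirst
  constructor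
  · rintro h ⟨a, s, s', hsub⟩
    obtain ⟨x, y, z, hxyz⟩ := ccu_pair_sublist_decomp hsub
    exact h ⟨x, y, z, a, s, s', hxyz⟩
  · rintro h ⟨x, y, z, a, s, s', hw⟩
    exact h ⟨a, s, s', hw ▸ ccu_decomp_pair_sublist x y z _ _⟩

lemma ccu_tailsFirst_of_sublist {v w : GWord} (hvw : v <+ w) (hw : TailsFirst w) :
    TailsFirst v := by
  rw [ccu_tailsFirst_iff] at *
  rintro ⟨a, s, s', h⟩
  exact hw ⟨a, s, s', h.trans hvw⟩

lemma ccu_exists_first_head : ∀ (w : GWord), (∃ e ∈ w, e.2.1 = true) →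
    ∃ (p : GWord) (b : ℕ) (t : Bool) (q : GWord),
      w = p ++ (b, true, t) :: q ∧ ∀ e ∈ p, e.2.1 = false := by
  intro w
  induction w with
  | nil => rintro ⟨e, he, -⟩; simp at he
  | cons e w ih =>
      rintro ⟨f, hf, hfh⟩
      obtain ⟨b, c, t⟩ := e
      by_cases hc : c = true
      · subst hc
        exact ⟨[], b, t, w, rfl, by simp⟩
      · have hfw : f ∈ w := by
          rcases List.mem_cons.mp hf with hf | hf
          · exfalso; apply hc; rw [hf] at hfh; exact hfh
          · exact hf
        obtain ⟨p, b', t', q, hpq, hp⟩ := ih ⟨f, hfw, hfh⟩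
        refine ⟨(b, c, t) :: p, b', t', q, by simp [hpq], ?_⟩
        rintro e' he'
        rcases List.mem_cons.mp he' with he' | he'
        · simp [he']; exact Bool.eq_false_iff.mpr hc
        · exact hp e' he'

lemma ccu_countP_zero_ne {l : GWord} {a : ℕ}
    (h : l.countP (fun e => e.1 == a) = 0) : ∀ e ∈ l, e.1 ≠ a := by
  intro e he
  have := List.countP_eq_zero.mp h e he
  simpa using this

lemma ccu_free_of_sum {p1 p2 q : GWord} {b : ℕ}
    (h : p1.countP (fun e => e.1 == b) +
      (p2.countP (fun e => e.1 == b) + (q.countP (fun e => e.1 == b) + 1) + 1) = 2) :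
    (∀ e ∈ p1, e.1 ≠ b) ∧ (∀ e ∈ p2, e.1 ≠ b) ∧ (∀ e ∈ q, e.1 ≠ b) := by
  refine ⟨ccu_countP_zero_ne (by omega), ccu_countP_zero_ne (by omega),
    ccu_countP_zero_ne (by omega)⟩

lemma ccu_count_del {p1 p2 q : GWord} {b c : ℕ} {t t' : Bool} (hbc : b ≠ c)
    (h : (p1 ++ (b, false, t') :: (p2 ++ (b, true, t) :: q)).countP (fun e => e.1 == c) = 2) :
    ((p1 ++ p2) ++ q).countP (fun e => e.1 == c) = 2 := by
  simp only [List.countP_append, List.countP_cons] at h ⊢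
  simp [hbc] at h
  omega

/-- Main lemma: a tails-first Gauss code is welded-trivial. -/
lemma ccu_trivial_of_tailsFirst (n : ℕ) : ∀ (w : GWord), w.length = n →
    IsGaussCode w → TailsFirst w → WeldedEquiv w [] := by
  induction n using Nat.strong_induction_on with
  | _ n ih =>
    intro w hlen hg ht
    rcases w with _ | ⟨e₀, w₀⟩
    · exact Relation.EqvGen.refl []
    -- there is a head in the word
    have ha0 : e₀.1 ∈ chordSet (e₀ :: w₀) := ⟨e₀, by simp, rfl⟩
    obtain ⟨-, s₀, -, hhead0⟩ := hg _ ha0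
    have hhead : ∃ e ∈ (e₀ :: w₀), e.2.1 = true := ⟨(e₀.1, true, s₀), hhead0, rfl⟩
    set w : GWord := e₀ :: w₀ with hwdef
    clear_value w
    obtain ⟨p, b, t, q, hw, hp⟩ := ccu_exists_first_head w hhead
    -- the chord b
    have hbmem : b ∈ chordSet w := ⟨(b, true, t), by rw [hw]; simp, rfl⟩
    obtain ⟨hcount, t', htail', hhead'⟩ := hg b hbmem
    -- the tail of b is in p (not in q by TailsFirst, not the head itself)
    have htail_in : (b, false, t') ∈ p ∨ (b, false, t') ∈ q := by
      rw [hw] at htail'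
      rcases List.mem_append.mp htail' with h | h
      · exact Or.inl h
      · rcases List.mem_cons.mp h with h | h
        · exact absurd h (by simp)
        · exact Or.inr h
    have htailp : (b, false, t') ∈ p := by
      rcases htail_in with h | h
      · exact h
      · exfalso
        obtain ⟨q1, q2, hq⟩ := List.append_of_mem h
        exact ht ⟨p, q1, q2, b, t, t', by rw [hw, hq]⟩
    obtain ⟨p1, p2, hpdec⟩ := List.append_of_mem htailp
    have hw2 : w = p1 ++ (b, false, t') :: (p2 ++ (b, true, t) :: q) := by
      rw [hw, hpdec]; simp
    -- a-freeness of p1, p2, q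
    have hcnt2 : (p1 ++ (b, false, t') :: (p2 ++ (b, true, t) :: q)).countP
        (fun e => e.1 == b) = 2 := hw2 ▸ hcount
    have hcnt2' : p1.countP (fun e => e.1 == b) +
        (p2.countP (fun e => e.1 == b) + (q.countP (fun e => e.1 == b) + 1) + 1) = 2 := by
      have := hcnt2
      simp only [List.countP_append, List.countP_cons] at this
      simpa using this
    obtain ⟨hf1, hf2, hf3⟩ := ccu_free_of_sum hcnt2'
    -- signs agree
    have hts : t' = t := by
      rw [hw2] at hhead'
      rcases List.mem_append.mp hhead' with h | h
      · exact absurd rfl (hf1 _ h)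
      · rcases List.mem_cons.mp h with h | h
        · exact absurd (congrArg (fun e => e.2.1) h) (by simp)
        · rcases List.mem_append.mp h with h | h
          · exact absurd rfl (hf2 _ h)
          · rcases List.mem_cons.mp h with h | h
            · exact congrArg (fun e => e.2.2) h
            · exact absurd rfl (hf3 _ h)
    subst hts
    -- p2 is all tails
    have hp2 : ∀ e ∈ p2, e.2.1 = false := fun e he => hp e (by rw [hpdec]; simp [he])
    -- the W moves and the C1 move
    have hmove := ccu_move_tail p2 p1 ((b, true, t') :: q) b t' hp2
    have hc1 : WeldedEquiv ((p1 ++ p2) ++ (b, false, t') :: (b, true, t') :: q)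
        ((p1 ++ p2) ++ q) := by
      apply ccu_c1del
      intro e he
      rcases List.mem_append.mp he with h | h
      · rcases List.mem_append.mp h with h | h
        · exact hf1 e h
        · exact hf2 e h
      · exact hf3 e h
    -- the smaller word
    set v : GWord := (p1 ++ p2) ++ q with hv
    have hsubv : v <+ w := by
      rw [hw2, hv, List.append_assoc]
      refine List.Sublist.append_left ?_ p1
      refine List.Sublist.trans ?_ (List.sublist_cons_self _ _)
      refine List.Sublist.append_left ?_ p2
      exact List.sublist_cons_self _ _
    have hlenv : v.length < n := by
      have h1 : w.length = n := hlen
      rw [hw2] at h1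
      simp only [List.length_append, List.length_cons] at h1
      simp only [hv, List.length_append]
      omega
    have htv : TailsFirst v := ccu_tailsFirst_of_sublist hsubv ht
    have hgv : IsGaussCode v := by
      intro c hc
      obtain ⟨e, hev, hec⟩ := hc
      have hcb : c ≠ b := by
        rcases List.mem_append.mp hev with h | h
        · rcases List.mem_append.mp h with h | h
          · exact hec ▸ hf1 e h
          · exact hec ▸ hf2 e h
        · exact hec ▸ hf3 e h
      have hcw : c ∈ chordSet w := ⟨e, hsubv.subset hev, hec⟩
      obtain ⟨hcnt, sc, htc, hhc⟩ := hg c hcw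
      constructor
      · rw [hw2] at hcnt
        exact ccu_count_del (Ne.symm hcb) hcnt
      · refine ⟨sc, ?_, ?_⟩
        · rw [hw2] at htc
          rcases List.mem_append.mp htc with h | h
          · exact List.mem_append.mpr (Or.inl (List.mem_append.mpr (Or.inl h)))
          · rcases List.mem_cons.mp h with h | h
            · exact absurd (congrArg Prod.fst h) hcb
            · rcases List.mem_append.mp h with h | h
              · exact List.mem_append.mpr (Or.inl (List.mem_append.mpr (Or.inr h)))
              · rcases List.mem_cons.mp h with h | h
                · exact absurd (congrArg Prod.fst h) hcb
                · exact List.mem_append.mpr (Or.inr h)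
        · rw [hw2] at hhc
          rcases List.mem_append.mp hhc with h | h
          · exact List.mem_append.mpr (Or.inl (List.mem_append.mpr (Or.inl h)))
          · rcases List.mem_cons.mp h with h | h
            · exact absurd (congrArg Prod.fst h) hcb
            · rcases List.mem_append.mp h with h | h
              · exact List.mem_append.mpr (Or.inl (List.mem_append.mpr (Or.inr h)))
              · rcases List.mem_cons.mp h with h | h
                · exact absurd (congrArg Prod.fst h) hcb
                · exact List.mem_append.mpr (Or.inr h)
    have hV : WeldedEquiv v [] := ih v.length hlenv v rfl hgv htv
    -- assemble
    have hstep1 : WeldedEquiv w ((p1 ++ p2) ++ (b, false, t') :: (b, true, t') :: q) := by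
      rw [hw2]
      have := Relation.EqvGen.symm _ _ hmove
      simpa [List.append_assoc, WeldedEquiv] using this
    exact Relation.EqvGen.trans _ _ _ hstep1 (Relation.EqvGen.trans _ _ _ hc1 hV)

lemma ccu_cc_fst (S : Finset ℕ) (e : GEntry) :
    ((if e.1 ∈ S then (e.1, !e.2.1, !e.2.2) else e) : GEntry).1 = e.1 := by
  split <;> rfl

lemma ccu_chordSet_cc (S : Finset ℕ) (w : GWord) :
    chordSet (crossingChange S w) = chordSet w := by
  ext a
  constructor
  · rintro ⟨e, he, hea⟩
    rw [crossingChange, List.mem_map] at he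
    obtain ⟨e', he', rfl⟩ := he
    exact ⟨e', he', by rw [← hea, ccu_cc_fst]⟩
  · rintro ⟨e, he, hea⟩
    exact ⟨_, List.mem_map_of_mem he, by rw [ccu_cc_fst]; exact hea⟩

lemma ccu_countP_cc (S : Finset ℕ) (w : GWord) (a : ℕ) :
    (crossingChange S w).countP (fun e => e.1 == a) = w.countP (fun e => e.1 == a) := by
  rw [crossingChange, List.countP_map]
  refine List.countP_congr fun e _ => ?_
  simp [Function.comp, ccu_cc_fst]

lemma ccu_gauss_cc (S : Finset ℕ) {w : GWord} (h : IsGaussCode w) :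
    IsGaussCode (crossingChange S w) := by
  intro a ha
  rw [ccu_chordSet_cc] at ha
  obtain ⟨h2, s, ht, hh⟩ := h a ha
  refine ⟨by rw [ccu_countP_cc]; exact h2, ?_⟩
  by_cases hS : a ∈ S
  · refine ⟨!s, ?_, ?_⟩
    · have := List.mem_map_of_mem (f := fun e : GEntry =>
        if e.1 ∈ S then (e.1, !e.2.1, !e.2.2) else e) hh
      simpa [crossingChange, hS] using this
    · have := List.mem_map_of_mem (f := fun e : GEntry =>
        if e.1 ∈ S then (e.1, !e.2.1, !e.2.2) else e) ht
      simpa [crossingChange, hS] using this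
  · refine ⟨s, ?_, ?_⟩
    · have := List.mem_map_of_mem (f := fun e : GEntry =>
        if e.1 ∈ S then (e.1, !e.2.1, !e.2.2) else e) ht
      simpa [crossingChange, hS] using this
    · have := List.mem_map_of_mem (f := fun e : GEntry =>
        if e.1 ∈ S then (e.1, !e.2.1, !e.2.2) else e) hh
      simpa [crossingChange, hS] using this

def ccu_badS (w : GWord) : Finset ℕ :=
  (w.map Prod.fst).toFinset.filter (fun a => ccu_headFirst a w = true)

lemma ccu_badS_subset (w : GWord) : ↑(ccu_badS w) ⊆ chordSet w := by
  intro a ha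
  simp only [ccu_badS, Finset.coe_filter, Set.mem_setOf_eq, List.mem_toFinset,
    List.mem_map] at ha
  obtain ⟨⟨e, he, hea⟩, -⟩ := ha
  exact ⟨e, he, hea⟩

lemma ccu_mem_badS {w : GWord} {a : ℕ} (haw : a ∈ chordSet w) :
    a ∈ ccu_badS w ↔ ccu_headFirst a w = true := by
  simp only [ccu_badS, Finset.mem_filter, List.mem_toFinset, List.mem_map]
  obtain ⟨e, he, hea⟩ := haw
  exact ⟨fun h => h.2, fun h => ⟨⟨e, he, hea⟩, h⟩⟩

lemma ccu_free_x {x y z : GWord} {e1 e2 : GEntry} {a : ℕ} (h1 : e1.1 = a) (h2 : e2.1 = a)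
    (hcnt : (x ++ e1 :: (y ++ e2 :: z)).countP (fun e => e.1 == a) = 2) :
    ∀ e' ∈ x, e'.1 ≠ a := by
  refine ccu_countP_zero_ne ?_
  simp only [List.countP_append, List.countP_cons] at hcnt
  simp [h1, h2] at hcnt
  omega

lemma ccu_headFirst_of_pair {w : GWord} {e1 e2 : GEntry} {a : ℕ}
    (hg : IsGaussCode w) (hsub : [e1, e2] <+ w) (h1 : e1.1 = a) (h2 : e2.1 = a) :
    ccu_headFirst a w = e1.2.1 := by
  obtain ⟨x, y, z, hxyz⟩ := ccu_pair_sublist_decomp hsub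
  have haw : a ∈ chordSet w := ⟨e1, hsub.subset (by simp), h1⟩
  obtain ⟨hcnt, -⟩ := hg a haw
  rw [hxyz] at hcnt ⊢
  exact ccu_headFirst_eq a x e1 (y ++ e2 :: z) (ccu_free_x h1 h2 hcnt) h1

lemma ccu_tailsFirst_cc {w : GWord} (hg : IsGaussCode w) :
    TailsFirst (crossingChange (ccu_badS w) w) := by
  rw [ccu_tailsFirst_iff]
  rintro ⟨a, s, s', hsub⟩
  rw [crossingChange] at hsub
  obtain ⟨l, hl, hmap⟩ := List.sublist_map_iff.mp hsub
  rcases l with _ | ⟨e1, _ | ⟨e2, _ | ⟨e3, l⟩⟩⟩ <;> simp only [List.map_cons, List.map_nil] at hmap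
  · exact absurd hmap (by simp)
  · exact absurd hmap (by simp)
  case cons.cons.nil =>
    injection hmap with hm1 hmap'
    injection hmap' with hm2 _
    have he1 : e1.1 = a := by
      have := congrArg Prod.fst hm1
      rw [ccu_cc_fst] at this
      exact this.symm
    have he2 : e2.1 = a := by
      have := congrArg Prod.fst hm2
      rw [ccu_cc_fst] at this
      exact this.symm
    have haw : a ∈ chordSet w := ⟨e1, hl.subset (by simp), he1⟩
    have hhf : ccu_headFirst a w = e1.2.1 := ccu_headFirst_of_pair hg hl he1 he2
    by_cases hS : a ∈ ccu_badS w
    · have htrue : e1.2.1 = true := by rw [← hhf]; exact (ccu_mem_badS haw).mp hS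
      rw [if_pos (he1 ▸ hS)] at hm1
      have := congrArg (fun e : GEntry => e.2.1) hm1
      simp only at this
      rw [htrue] at this
      simp at this
    · have hfalse : (e1.1 ∈ ccu_badS w) = False := by
        simp [he1, hS]
      rw [if_neg (by simp [he1, hS])] at hm1
      have : e1.2.1 = true := by rw [← hm1]
      exact hS ((ccu_mem_badS haw).mpr (hhf.trans this))
  · exact absurd hmap (by simp)

end CCUAux

/-- For every Gauss code `D` there is a set `S` of chords of
`D` such that the code obtained from `D` by the crossing change at `S`
represents the trivial welded knot, i.e. is welded-equivalent to the empty
code. -/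
theorem crossing_changes_unknot (D : GWord) (hD : IsGaussCode D) :
    ∃ S : Finset ℕ, ↑S ⊆ chordSet D ∧ WeldedEquiv (crossingChange S D) [] := by
  refine ⟨ccu_badS D, ccu_badS_subset D, ?_⟩
  exact ccu_trivial_of_tailsFirst (crossingChange (ccu_badS D) D).length _ rfl
    (ccu_gauss_cc _ hD) (ccu_tailsFirst_cc hD)
end

section
/- Let D be a Gauss code and x a chord of D such that one of the two open arcs into which the two endpoints of x divide the cyclic word contains no head endpoints. Then D can be transformed into the Gauss code obtained from D by deleting the chord x by a finite sequence of W moves followed by one C1 move; in particular, the two codes are welded-equivalent. -/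
/-! ### Auxiliary lemmas -/

lemma rotEq_iff {w w' : GWord} : RotEq w w' ↔ w ~r w' := by
  unfold RotEq List.IsRotated
  exact exists_congr fun n => eq_comm

lemma rotEq_refl (w : GWord) : RotEq w w := ⟨0, (w.rotate_zero).symm⟩

lemma rotEq_trans {u v w : GWord} (h1 : RotEq u v) (h2 : RotEq v w) : RotEq u w :=
  rotEq_iff.2 ((rotEq_iff.1 h1).trans (rotEq_iff.1 h2))

lemma rotEq_symm {u v : GWord} (h : RotEq u v) : RotEq v u :=
  rotEq_iff.2 (rotEq_iff.1 h).symm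

lemma cyclicRename_of_rotEq {w w' : GWord} (h : RotEq w w') : CyclicRename w w' := by
  obtain ⟨n, rfl⟩ := h
  refine ⟨n, id, Function.injective_id, ?_⟩
  simp [relabelWord]

lemma wStep_welded {u v : GWord} (h : WStepRot u v) : WeldedStep u v := by
  obtain ⟨u₀, v₀, h1, h2, h3⟩ := h
  exact ⟨u₀, v₀, cyclicRename_of_rotEq h1, cyclicRename_of_rotEq h2,
    Or.inr (Or.inr (Or.inr (Or.inr (Or.inr (Or.inr h3)))))⟩

lemma c1Step_welded {u v : GWord} (h : C1StepRot u v) : WeldedStep u v := by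
  obtain ⟨u₀, v₀, h1, h2, h3⟩ := h
  exact ⟨u₀, v₀, cyclicRename_of_rotEq h1, cyclicRename_of_rotEq h2, Or.inl h3⟩

lemma wStep_absorb {D u v : GWord} (hr : RotEq D u) (h : WStepRot u v) : WStepRot D v := by
  obtain ⟨u₀, v₀, h1, h2, h3⟩ := h
  exact ⟨u₀, v₀, rotEq_trans hr h1, h2, h3⟩

lemma chain_shift {u F : GWord} (h : Relation.ReflTransGen WStepRot u F) :
    ∀ D, RotEq D u → ∃ m, Relation.ReflTransGen WStepRot D m ∧ RotEq m F := by
  induction h using Relation.ReflTransGen.head_induction_on with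
  | refl => exact fun D hD => ⟨D, .refl, hD⟩
  | head hstep _ ih =>
      intro D hD
      obtain ⟨m, hm, hr⟩ := ih _ (rotEq_refl _)
      exact ⟨m, .head (wStep_absorb hD hstep) hm, hr⟩

lemma rtg_to_eqv {a b : GWord} (h : Relation.ReflTransGen WStepRot a b) :
    WeldedEquiv a b := by
  induction h with
  | refl => exact Relation.EqvGen.refl _
  | tail _ hstep ih =>
      exact Relation.EqvGen.trans _ _ _ ih (Relation.EqvGen.rel _ _ (wStep_welded hstep))

/-- Moving a tail endpoint rightwards across a block of tails, by W moves. -/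
lemma w_chain_right (x : ℕ) (s : Bool) :
    ∀ (arc : GWord), (∀ e ∈ arc, e.2.1 = false) → ∀ p q : GWord,
    Relation.ReflTransGen WStepRot (p ++ (x, false, s) :: (arc ++ q))
      (p ++ arc ++ (x, false, s) :: q)
  | [], _, p, q => by simp; exact .refl
  | ⟨b, hb, t⟩ :: arc, h, p, q => by
      have hb1 : hb = false := h _ List.mem_cons_self
      subst hb1
      have step : WStepRot (p ++ (x, false, s) :: ((b, false, t) :: arc ++ q))
          ((p ++ [(b, false, t)]) ++ (x, false, s) :: (arc ++ q)) := by
        refine ⟨_, _, rotEq_refl _, rotEq_refl _, p, arc ++ q, x, b, s, t, rfl, by simp⟩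
      have ih := w_chain_right x s arc (fun e he => h e (List.mem_cons_of_mem _ he))
        (p ++ [(b, false, t)]) q
      refine Relation.ReflTransGen.head step (ih.trans ?_)
      simp
      exact .refl

/-- Moving a tail endpoint leftwards across a block of tails, by W moves. -/
lemma w_chain_left (x : ℕ) (s : Bool) :
    ∀ (arc : GWord), (∀ e ∈ arc, e.2.1 = false) → ∀ p q : GWord,
    Relation.ReflTransGen WStepRot (p ++ arc ++ (x, false, s) :: q)
      (p ++ (x, false, s) :: (arc ++ q))
  | [], _, p, q => by simp; exact .refl
  | ⟨b, hb, t⟩ :: arc, h, p, q => by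
      have hb1 : hb = false := h _ List.mem_cons_self
      subst hb1
      have ih := w_chain_left x s arc (fun e he => h e (List.mem_cons_of_mem _ he))
        (p ++ [(b, false, t)]) q
      have step : WStepRot (p ++ (b, false, t) :: (x, false, s) :: (arc ++ q))
          (p ++ (x, false, s) :: ((b, false, t) :: arc ++ q)) := by
        refine ⟨_, _, rotEq_refl _, rotEq_refl _, p, arc ++ q, b, x, t, s, rfl, by simp⟩
      have ih' : Relation.ReflTransGen WStepRot
          (p ++ ((b, false, t) :: arc) ++ (x, false, s) :: q)
          (p ++ (b, false, t) :: (x, false, s) :: (arc ++ q)) := by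
        have := ih
        simp only [List.append_assoc, List.singleton_append, List.cons_append] at this ⊢
        exact this
      exact ih'.tail step

lemma filter_rotEq (p : GEntry → Bool) {l : GWord} (n : ℕ) :
    RotEq (List.filter p (l.rotate n)) (List.filter p l) := by
  rw [List.rotate_eq_drop_append_take_mod, List.filter_append]
  refine rotEq_iff.2 ?_
  calc (l.drop (n % l.length)).filter p ++ (l.take (n % l.length)).filter p
      ~r (l.take (n % l.length)).filter p ++ (l.drop (n % l.length)).filter p :=
        List.isRotated_append
    _ = List.filter p l := by rw [← List.filter_append, List.take_append_drop]
/-- If one of the two open arcs into which the endpoints of a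
chord `x` divide the cyclic word of a Gauss code `D` contains no head
endpoints, then `D` can be transformed into the code obtained by deleting the
chord `x` by a finite sequence of W moves followed by one C1 move; in
particular the two codes are welded-equivalent. -/
theorem delete_chord_by_W_and_C1 (D : GWord) (hD : IsGaussCode D)
    (x : ℕ) (hx : x ∈ chordSet D)
    (harc : ∃ (n : ℕ) (arc rest : GWord) (h s : Bool),
      D.rotate n = (x, h, s) :: (arc ++ (x, !h, s) :: rest) ∧
      ∀ e ∈ arc, e.2.1 = false) :
    (∃ m : GWord, Relation.ReflTransGen WStepRot D m ∧
      C1StepRot m (deleteChord x D)) ∧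
    WeldedEquiv D (deleteChord x D) := by
  obtain ⟨n, arc, rest, h, s, hrot, harc2⟩ := harc
  have hcnt : (D.rotate n).countP (fun e => e.1 == x) = 2 := by
    rw [(List.rotate_perm D n).countP_eq]
    exact (hD x hx).1
  rw [hrot] at hcnt
  simp only [List.countP_cons, List.countP_append, beq_self_eq_true, if_pos] at hcnt
  have harcx : ∀ e ∈ arc, e.1 ≠ x := by
    intro e he
    have h0 : arc.countP (fun e => e.1 == x) = 0 := by omega
    have := List.countP_eq_zero.mp h0 e he
    simpa using this
  have hrestx : ∀ e ∈ rest, e.1 ≠ x := by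
    intro e he
    have h0 : rest.countP (fun e => e.1 == x) = 0 := by omega
    have := List.countP_eq_zero.mp h0 e he
    simpa using this
  have hdel : deleteChord x (D.rotate n) = arc ++ rest := by
    rw [hrot]
    unfold deleteChord
    rw [List.filter_cons, List.filter_append, List.filter_cons]
    have hxx : ((x : ℕ) != x) = false := by simp
    rw [hxx]
    simp only [Bool.false_eq_true, if_false]
    rw [List.filter_eq_self.mpr (fun e he => by simp [harcx e he]),
      List.filter_eq_self.mpr (fun e he => by simp [hrestx e he])]
  have hrotdel : RotEq (arc ++ rest) (deleteChord x D) := by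
    have h2 : RotEq (deleteChord x (D.rotate n)) (deleteChord x D) :=
      filter_rotEq _ n
    rwa [hdel] at h2
  have hno : ∀ e ∈ arc ++ rest, e.1 ≠ x := by
    intro e he
    rcases List.mem_append.mp he with h1 | h1
    exacts [harcx e h1, hrestx e h1]
  cases h with
  | false =>
      simp only [Bool.not_false] at hrot
      have chain := w_chain_right x s arc harc2 [] ((x, true, s) :: rest)
      simp only [List.nil_append] at chain
      obtain ⟨m, hm, hmF⟩ := chain_shift chain D ⟨n, hrot.symm⟩
      have hc1 : C1StepRot m (deleteChord x D) := by
        refine ⟨_, arc ++ rest, hmF, hrotdel, arc, rest, x, false, s, hno, by simp, rfl⟩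
      exact ⟨⟨m, hm, hc1⟩, Relation.EqvGen.trans _ _ _ (rtg_to_eqv hm)
        (Relation.EqvGen.rel _ _ (c1Step_welded hc1))⟩
  | true =>
      simp only [Bool.not_true] at hrot
      have chain := w_chain_left x s arc harc2 [(x, true, s)] rest
      simp only [List.singleton_append, List.cons_append, List.append_assoc] at chain
      obtain ⟨m, hm, hmF⟩ := chain_shift chain D ⟨n, hrot.symm⟩
      have hc1 : C1StepRot m (deleteChord x D) := by
        refine ⟨_, arc ++ rest, hmF, hrotdel, [], arc ++ rest, x, true, s, hno, by simp, by simp⟩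
      exact ⟨⟨m, hm, hc1⟩, Relation.EqvGen.trans _ _ _ (rtg_to_eqv hm)
        (Relation.EqvGen.rel _ _ (c1Step_welded hc1))⟩
end

section
/- Let D be a Gauss code and x a chord of D such that one of the two open arcs into which the two endpoints of x divide the cyclic word contains no head endpoints. Then a finite sequence of W moves transforms D into a Gauss code in which the two endpoints of x occupy adjacent positions. -/
lemma aux_W_adjacent (x : ℕ) : ∀ (k : ℕ) (arc : GWord), arc.length = k →
    (∀ e ∈ arc, e.2.1 = false) →
    ∀ (D rest : GWord) (h s : Bool) (n : ℕ),
    D.rotate n = (x, h, s) :: (arc ++ (x, !h, s) :: rest) →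
    ∃ v : GWord, Relation.ReflTransGen WStepRot D v ∧
      ∃ (m : ℕ) (y : GWord) (h' s' : Bool),
        v.rotate m = (x, h', s') :: (x, !h', s') :: y := by
  intro k
  induction k with
  | zero =>
    intro arc hlen _ D rest h s n hrot
    have : arc = [] := List.length_eq_zero_iff.mp hlen
    subst this
    exact ⟨D, .refl, n, rest, h, s, by simpa using hrot⟩
  | succ k ih =>
    intro arc hlen hall D rest h s n hrot
    cases h with
    | false =>
      obtain ⟨e, arc', rfl⟩ : ∃ e arc', arc = e :: arc' := by
        cases arc with
        | nil => simp at hlen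
        | cons e t => exact ⟨e, t, rfl⟩
      obtain ⟨b, hb, t⟩ := e
      have hb0 : hb = false := hall (b, hb, t) (by simp)
      subst hb0
      set v₀ : GWord :=
        (b, false, t) :: (x, false, s) :: (arc' ++ (x, true, s) :: rest) with hv₀
      have hW : WRaw (D.rotate n) v₀ := by
        refine ⟨[], arc' ++ (x, true, s) :: rest, x, b, s, t, ?_, ?_⟩
        · simpa using hrot
        · simp [hv₀]
      have hstep : WStepRot D v₀ :=
        ⟨D.rotate n, v₀, ⟨n, rfl⟩, ⟨0, (List.rotate_zero _).symm⟩, hW⟩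
      have hrot' : v₀.rotate 1 =
          (x, false, s) :: (arc' ++ (x, !false, s) :: (rest ++ [(b, false, t)])) := by
        have : v₀.rotate (0 + 1) =
            (((x, false, s) :: (arc' ++ (x, true, s) :: rest)) ++
              [(b, false, t)]).rotate 0 := List.rotate_cons_succ _ _ 0
        simpa using this
      obtain ⟨v, hv, hfin⟩ := ih arc' (by simpa using hlen)
        (fun e he => hall e (by simp [he])) v₀ (rest ++ [(b, false, t)])
        false s 1 hrot'
      exact ⟨v, Relation.ReflTransGen.head hstep hv, hfin⟩
    | true =>
      obtain ⟨arc', e, rfl⟩ : ∃ arc' e, arc = arc' ++ [e] := by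
        rcases List.eq_nil_or_concat arc with h0 | ⟨l', a, ha⟩
        · subst h0; simp at hlen
        · exact ⟨l', a, by simp [ha]⟩
      obtain ⟨b, hb, t⟩ := e
      have hb0 : hb = false := hall (b, hb, t) (by simp)
      subst hb0
      set v₀ : GWord :=
        (x, true, s) :: (arc' ++ (x, !true, s) :: ((b, false, t) :: rest)) with hv₀
      have hW : WRaw (D.rotate n) v₀ := by
        refine ⟨(x, true, s) :: arc', rest, b, x, t, s, ?_, ?_⟩
        · rw [hrot]; simp
        · simp [hv₀]
      have hstep : WStepRot D v₀ :=
        ⟨D.rotate n, v₀, ⟨n, rfl⟩, ⟨0, (List.rotate_zero _).symm⟩, hW⟩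
      obtain ⟨v, hv, hfin⟩ := ih arc' (by simpa using hlen)
        (fun e he => hall e (by simp [he])) v₀ ((b, false, t) :: rest)
        true s 0 (by simp [hv₀])
      exact ⟨v, Relation.ReflTransGen.head hstep hv, hfin⟩

/-- If one of the two open arcs into which the endpoints of a
chord `x` divide the cyclic word of a Gauss code `D` contains no head
endpoints, then a finite sequence of W moves transforms `D` into a Gauss code
in which the two endpoints of `x` occupy adjacent positions. -/
theorem W_moves_make_endpoints_adjacent (D : GWord) (hD : IsGaussCode D)
    (x : ℕ) (hx : x ∈ chordSet D)
    (harc : ∃ (n : ℕ) (arc rest : GWord) (h s : Bool),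
      D.rotate n = (x, h, s) :: (arc ++ (x, !h, s) :: rest) ∧
      ∀ e ∈ arc, e.2.1 = false) :
    ∃ v : GWord, Relation.ReflTransGen WStepRot D v ∧
      ∃ (n : ℕ) (y : GWord) (h s : Bool),
        v.rotate n = (x, h, s) :: (x, !h, s) :: y := by
  obtain ⟨n, arc, rest, h, s, hrot, hall⟩ := harc
  exact aux_W_adjacent x arc.length arc rfl hall D rest h s n hrot
end

section
/- Let D be a descending Gauss code with at least one chord, cut and oriented so that every tail occurs before its head in the resulting linear word, and let x be the chord whose head occurs first among all head endpoints of this linear word. Then the open arc of the cyclic word running from the tail of x to the head of x contains no head endpoints, and the Gauss code obtained from D by deleting the chord x is again descending. -/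
lemma pair_sublist_decomp {a : ℕ} {s s' : Bool} {v : GWord}
    (h : List.Sublist [(a, true, s), (a, false, s')] v) :
    ∃ x y z : GWord, v = x ++ (a, true, s) :: (y ++ (a, false, s') :: z) := by
  rw [List.cons_sublist_iff] at h
  obtain ⟨r₁, r₂, rfl, hm, hs⟩ := h
  rw [List.singleton_sublist] at hs
  obtain ⟨x, x', rfl⟩ := List.append_of_mem hm
  obtain ⟨y', z, rfl⟩ := List.append_of_mem hs
  exact ⟨x, x' ++ y', z, by simp⟩

lemma tailsFirst_sublist {u v : GWord} (h : List.Sublist u v) (hv : TailsFirst v) :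
    TailsFirst u := by
  rintro ⟨x, y, z, a, s, s', rfl⟩
  have hsub : List.Sublist [(a, true, s), (a, false, s')]
      (x ++ (a, true, s) :: (y ++ (a, false, s') :: z)) := by
    refine List.sublist_append_of_sublist_right ?_
    refine List.cons_sublist_cons.mpr ?_
    refine List.sublist_append_of_sublist_right ?_
    simp
  obtain ⟨x', y', z', hv'⟩ := pair_sublist_decomp (hsub.trans h)
  exact hv ⟨x', y', z', a, s, s', hv'⟩

/-- Let `D` be a descending Gauss code with at least one
chord, cut and oriented so that every tail occurs before its head in the
linear word `D`, and let `x` be the chord whose head occurs first among all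
heads of `D` (so `D = p ++ (x, true, s) :: q` with no head in `p`).  Then the
open arc running from the tail of `x` to the head of `x` contains no head
endpoints, and deleting the chord `x` again yields a descending code. -/
theorem first_head_arc_and_delete_descending (D : GWord) (hD : IsGaussCode D)
    (hdesc : TailsFirst D)
    (x : ℕ) (s : Bool) (p q : GWord)
    (hsplit : D = p ++ (x, true, s) :: q)
    (hfirst : ∀ e ∈ p, e.2.1 = false) :
    (∃ (p₁ p₂ : GWord) (s' : Bool),
        p = p₁ ++ (x, false, s') :: p₂ ∧ ∀ e ∈ p₂, e.2.1 = false) ∧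
    IsDescending (deleteChord x D) := by
  constructor
  · -- tail of x lies in p
    have hx : x ∈ chordSet D := ⟨(x, true, s), by simp [hsplit], rfl⟩
    obtain ⟨-, s', htl, -⟩ := hD x hx
    rw [hsplit, List.mem_append, List.mem_cons] at htl
    rcases htl with htl | htl | htl
    · obtain ⟨p₁, p₂, rfl⟩ := List.append_of_mem htl
      exact ⟨p₁, p₂, s', rfl, fun e he => hfirst e (by simp [he])⟩
    · simp at htl
    · obtain ⟨q₁, q₂, rfl⟩ := List.append_of_mem htl
      exact absurd ⟨p, q₁, q₂, x, s, s', hsplit⟩ hdesc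
  · refine ⟨0, Or.inl ?_⟩
    rw [List.rotate_zero]
    exact tailsFirst_sublist (List.filter_sublist (l := D)) hdesc
end
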